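/- For all complex z, θ_{0,0}((1+i)z, i) · exp(πi(1+i)z²) · θ_{0,1/2}(0,i) · θ_{1/2,0}(0,i) = θ_{0,0}(0,i) · θ_{0,1/2}(z,i) · θ_{1/2,0}(z,i). -/
import Mathlib


open Complex Real

/-- Theta function with characteristics a, b:
θ_{a,b}(z,τ) = Σ_{n∈ℤ} exp(πi(n+a)²τ + 2πi(n+a)(z+b)). -/
noncomputable def theta (a b : ℝ) (z τ : ℂ) : ℂ :=
  ∑' n : ℤ, Complex.exp (Real.pi * Complex.I * ((n : ℂ) + (a : ℂ))^2 * τ +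
    2 * Real.pi * Complex.I * ((n : ℂ) + (a : ℂ)) * (z + (b : ℂ)))

/-! ### Auxiliary infrastructure: the "odd" Jacobi theta series and lattice equivalences -/

set_option linter.unnecessarySeqFocus false

/-- Parity equivalence on ℤ. -/
def evenOddEquiv : Bool × ℤ ≃ ℤ where
  toFun p := 2 * p.2 + (if p.1 then 1 else 0)
  invFun m := (decide (m % 2 = 1), m / 2)
  left_inv := by rintro ⟨(_|_), n⟩ <;> simp <;> omega
  right_inv := by
    intro m
    by_cases h : m % 2 = 1 <;> simp [h] <;> omega

/-- Parity equivalence on ℤ², implementing multiplication by (1+i). -/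
def gaussEquiv : Bool × (ℤ × ℤ) ≃ ℤ × ℤ where
  toFun p := (p.2.1 + p.2.2 + (if p.1 then 1 else 0), p.2.1 - p.2.2)
  invFun q := (decide ((q.1 + q.2) % 2 = 1), ((q.1 + q.2) / 2, (q.1 - q.2) / 2))
  left_inv := by rintro ⟨(_|_), a, c⟩ <;> simp <;> constructor <;> omega
  right_inv := by
    rintro ⟨m, n⟩
    by_cases h : (m + n) % 2 = 1 <;> simp [h] <;> constructor <;> omega

noncomputable def Joterm (n : ℤ) (x τ : ℂ) : ℂ :=
  cexp (2 * π * I * ((n : ℂ) + 1/2) * x + π * I * ((n : ℂ) + 1/2)^2 * τ)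

/-- The θ₂-type theta series (summation over half-odd integers). -/
noncomputable def Jo (x τ : ℂ) : ℂ := ∑' n : ℤ, Joterm n x τ

lemma Joterm_eq (n : ℤ) (x τ : ℂ) :
    Joterm n x τ = cexp (π * I * τ/4 + π * I * x) * jacobiTheta₂_term n (x + τ/2) τ := by
  rw [Joterm, jacobiTheta₂_term, ← Complex.exp_add]
  congr 1
  ring

lemma Jo_eq_shift (x τ : ℂ) :
    Jo x τ = cexp (π * I * τ/4 + π * I * x) * jacobiTheta₂ (x + τ/2) τ := by
  rw [Jo, jacobiTheta₂, ← tsum_mul_left]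
  exact tsum_congr fun n => Joterm_eq n x τ

lemma summ_norm_J' (z τ : ℂ) (hτ : 0 < im τ) :
    Summable (fun n : ℤ => ‖jacobiTheta₂_term n z τ‖) := by
  refine (summable_pow_mul_jacobiTheta₂_term_bound |im z| hτ 0).of_nonneg_of_le
    (fun n => norm_nonneg _) (fun n => ?_)
  simpa only [pow_zero, one_mul] using norm_jacobiTheta₂_term_le hτ le_rfl le_rfl n

lemma summ_norm_Jo' (x τ : ℂ) (hτ : 0 < im τ) :
    Summable (fun n : ℤ => ‖Joterm n x τ‖) := by
  have h := (summ_norm_J' (x + τ/2) τ hτ).mul_left ‖cexp (π * I * τ/4 + π * I * x)‖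
  refine h.congr fun n => ?_
  rw [Joterm_eq, norm_mul]

lemma Jo_add_one (x τ : ℂ) : Jo (x + 1) τ = - Jo x τ := by
  rw [Jo_eq_shift, Jo_eq_shift]
  have h : x + 1 + τ/2 = (x + τ/2) + 1 := by ring
  rw [h, jacobiTheta₂_add_left]
  rw [show (π * I * τ/4 + π * I * (x+1) : ℂ) = (π * I * τ/4 + π * I * x) + π * I by ring,
    Complex.exp_add, Complex.exp_pi_mul_I]
  ring

/-! ### The parity-splitting and product (addition) formulas -/

set_option maxHeartbeats 1000000 in
/-- Parity split : J(w,σ) = J(2w,4σ) + Jo(2w,4σ). -/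
lemma J_split (w σ : ℂ) (hσ : 0 < im σ) :
    jacobiTheta₂ w σ = jacobiTheta₂ (2*w) (4*σ) + Jo (2*w) (4*σ) := by
  have hs : Summable (fun n : ℤ => jacobiTheta₂_term n w σ) :=
    (summable_jacobiTheta₂_term_iff w σ).mpr hσ
  rw [jacobiTheta₂, ← evenOddEquiv.tsum_eq (jacobiTheta₂_term · w σ),
    Summable.tsum_prod' (f := fun c : Bool × ℤ => jacobiTheta₂_term (evenOddEquiv c) w σ)
      (evenOddEquiv.summable_iff.mpr hs)
      (fun b => (evenOddEquiv.summable_iff.mpr hs).comp_injective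
        (fun x y h => congrArg Prod.snd h)), tsum_bool]
  have h1 : ∀ n : ℤ, jacobiTheta₂_term (evenOddEquiv (false, n)) w σ
      = jacobiTheta₂_term n (2*w) (4*σ) := by
    intro n
    have he : (evenOddEquiv (false, n) : ℤ) = 2 * n := by simp [evenOddEquiv]
    rw [he, jacobiTheta₂_term, jacobiTheta₂_term]
    congr 1
    push_cast
    ring
  have h2 : ∀ n : ℤ, jacobiTheta₂_term (evenOddEquiv (true, n)) w σ = Joterm n (2*w) (4*σ) := by
    intro n
    have he : (evenOddEquiv (true, n) : ℤ) = 2 * n + 1 := by simp [evenOddEquiv]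
    rw [he, jacobiTheta₂_term, Joterm]
    congr 1
    push_cast
    ring
  rw [tsum_congr h1, tsum_congr h2, jacobiTheta₂, Jo]

set_option maxHeartbeats 1000000 in
/-- The product (addition) formula, obtained by rearranging the double series over ℤ². -/
lemma J_prod (x y τ : ℂ) (hτ : 0 < im τ) :
    jacobiTheta₂ x τ * jacobiTheta₂ y τ =
      jacobiTheta₂ (x+y) (2*τ) * jacobiTheta₂ (x-y) (2*τ)
        + Jo (x+y) (2*τ) * Jo (x-y) (2*τ) := by
  have h2τ : 0 < im (2*τ) := by
    rw [Complex.mul_im]; simp; linarith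
  have hnx := summ_norm_J' x τ hτ
  have hny := summ_norm_J' y τ hτ
  have hF : Summable (fun q : ℤ × ℤ => jacobiTheta₂_term q.1 x τ * jacobiTheta₂_term q.2 y τ) :=
    summable_mul_of_summable_norm (f := fun n => jacobiTheta₂_term n x τ)
      (g := fun n => jacobiTheta₂_term n y τ) hnx hny
  have key1 := tsum_mul_tsum_of_summable_norm (f := fun n => jacobiTheta₂_term n x τ)
      (g := fun n => jacobiTheta₂_term n y τ) hnx hny
  have key2 := tsum_mul_tsum_of_summable_norm (f := fun n => jacobiTheta₂_term n (x+y) (2*τ))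
      (g := fun n => jacobiTheta₂_term n (x-y) (2*τ))
      (summ_norm_J' (x+y) (2*τ) h2τ) (summ_norm_J' (x-y) (2*τ) h2τ)
  have key3 := tsum_mul_tsum_of_summable_norm (f := fun n => Joterm n (x+y) (2*τ))
      (g := fun n => Joterm n (x-y) (2*τ))
      (summ_norm_Jo' (x+y) (2*τ) h2τ) (summ_norm_Jo' (x-y) (2*τ) h2τ)
  rw [jacobiTheta₂, jacobiTheta₂, key1,
    ← gaussEquiv.tsum_eq (fun q : ℤ × ℤ => jacobiTheta₂_term q.1 x τ * jacobiTheta₂_term q.2 y τ),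
    Summable.tsum_prod' (f := fun c : Bool × (ℤ × ℤ) =>
        jacobiTheta₂_term (gaussEquiv c).1 x τ * jacobiTheta₂_term (gaussEquiv c).2 y τ)
      (gaussEquiv.summable_iff.mpr hF)
      (fun b => (gaussEquiv.summable_iff.mpr hF).comp_injective
        (fun u v h => congrArg Prod.snd h)), tsum_bool]
  have h1 : ∀ q : ℤ × ℤ, jacobiTheta₂_term (gaussEquiv (false, q)).1 x τ *
      jacobiTheta₂_term (gaussEquiv (false, q)).2 y τ
      = jacobiTheta₂_term q.1 (x+y) (2*τ) * jacobiTheta₂_term q.2 (x-y) (2*τ) := by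
    rintro ⟨a, c⟩
    have he1 : (gaussEquiv (false, (a, c))).1 = a + c := by simp [gaussEquiv]
    have he2 : (gaussEquiv (false, (a, c))).2 = a - c := by simp [gaussEquiv]
    rw [he1, he2]
    simp only [jacobiTheta₂_term, ← Complex.exp_add]
    congr 1
    push_cast
    ring
  have h2 : ∀ q : ℤ × ℤ, jacobiTheta₂_term (gaussEquiv (true, q)).1 x τ *
      jacobiTheta₂_term (gaussEquiv (true, q)).2 y τ
      = Joterm q.1 (x+y) (2*τ) * Joterm q.2 (x-y) (2*τ) := by
    rintro ⟨a, c⟩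
    have he1 : (gaussEquiv (true, (a, c))).1 = a + c + 1 := by simp [gaussEquiv]
    have he2 : (gaussEquiv (true, (a, c))).2 = a - c := by simp [gaussEquiv]
    rw [he1, he2]
    simp only [jacobiTheta₂_term, Joterm, ← Complex.exp_add]
    congr 1
    push_cast
    ring
  rw [tsum_congr h1, tsum_congr h2, ← key2, ← key3]
  rfl

/-! ### Functional equation consequences at τ = 2i and τ = i -/

lemma sqrt2_eq : ((Real.sqrt 2 : ℝ) : ℂ) = (2:ℂ) ^ (1/2 : ℂ) := by
  calc ((Real.sqrt 2 : ℝ) : ℂ) = (((2:ℝ) ^ ((1:ℝ)/2) : ℝ) : ℂ) := by rw [Real.sqrt_eq_rpow]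
    _ = ((2:ℝ):ℂ) ^ ((((1:ℝ)/2):ℝ):ℂ) := Complex.ofReal_cpow (by norm_num) _
    _ = (2:ℂ) ^ (1/2 : ℂ) := by norm_num

lemma R1 (x : ℂ) : jacobiTheta₂ x (2*I) = ((Real.sqrt 2 : ℝ) : ℂ)⁻¹ * cexp (-π * x^2 / 2) *
    (jacobiTheta₂ (-I*x) (2*I) + Jo (-I*x) (2*I)) := by
  have h := jacobiTheta₂_functional_equation x (2*I)
  have e1 : (-I * (2*I) : ℂ) = 2 := by linear_combination (-2:ℂ) * Complex.I_sq
  have e3 : (-1 : ℂ) / (2*I) = I/2 := by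
    rw [div_eq_iff (by simp [Complex.I_ne_zero])]
    linear_combination -Complex.I_sq
  have e4 : x / (2*I) = -I*x/2 := by
    rw [div_eq_div_iff (by simp [Complex.I_ne_zero]) (by norm_num)]
    linear_combination (2*x)*Complex.I_sq
  have e5 : (-↑π * I * x ^ 2 / (2*I) : ℂ) = -π * x^2/2 := by
    rw [div_eq_div_iff (by simp [Complex.I_ne_zero]) (by norm_num)]
    ring
  rw [e1, ← sqrt2_eq, e3, e4, e5, one_div] at h
  rw [h, J_split (-I*x/2) (I/2) (by simp)]
  rw [show (2*(-I*x/2) : ℂ) = -I*x by ring, show ((4:ℂ)*(I/2)) = 2*I by ring]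

lemma R1' (x : ℂ) : Jo x (2*I) = ((Real.sqrt 2:ℝ):ℂ)⁻¹ * cexp (-π * x^2/2) *
    (jacobiTheta₂ (-I*x) (2*I) - Jo (-I*x) (2*I)) := by
  rw [Jo_eq_shift, show (x + (2*I)/2 : ℂ) = x + I by ring, R1 (x+I),
    show (-I*(x+I) : ℂ) = (-I*x) + 1 by linear_combination -Complex.I_sq,
    jacobiTheta₂_add_left, Jo_add_one]
  have e7 : cexp (π*I*(2*I)/4 + π*I*x) * cexp (-π*(x+I)^2/2) = cexp (-π*x^2/2) := by
    rw [← Complex.exp_add]; congr 1; ring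
  calc cexp (π*I*(2*I)/4 + π*I*x) * (((Real.sqrt 2:ℝ):ℂ)⁻¹ * cexp (-π*(x+I)^2/2) *
          (jacobiTheta₂ (-I*x) (2*I) + -Jo (-I*x) (2*I)))
      = ((Real.sqrt 2:ℝ):ℂ)⁻¹ * (cexp (π*I*(2*I)/4 + π*I*x) * cexp (-π*(x+I)^2/2)) *
          (jacobiTheta₂ (-I*x) (2*I) - Jo (-I*x) (2*I)) := by ring
    _ = _ := by rw [e7]

lemma FEi (w : ℂ) : jacobiTheta₂ w I = cexp (-π * w^2) * jacobiTheta₂ (-I*w) I := by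
  have h := jacobiTheta₂_functional_equation w I
  have e1 : (-I * I : ℂ) = 1 := by linear_combination -Complex.I_sq
  have e3 : (-1 : ℂ) / I = I := by
    rw [div_eq_iff Complex.I_ne_zero]; linear_combination -Complex.I_sq
  have e4 : w / I = -I*w := by
    rw [div_eq_iff Complex.I_ne_zero]; linear_combination w*Complex.I_sq
  have e5 : (-↑π * I * w ^ 2 / I : ℂ) = -π * w^2 := by
    rw [div_eq_iff Complex.I_ne_zero]; ring
  rw [e1, Complex.one_cpow, e3, e4, e5] at h
  rw [h]
  norm_num

lemma Jo_I (z : ℂ) : Jo z I = cexp (-π * z^2) * jacobiTheta₂ (1/2 - I*z) I := by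
  rw [Jo_eq_shift, FEi (z + I/2),
    show (-I*(z + I/2) : ℂ) = 1/2 - I*z by linear_combination (-1/2 : ℂ)*Complex.I_sq]
  have e7 : cexp (π*I*I/4 + π*I*z) * cexp (-π*(z + I/2)^2) = cexp (-π*z^2) := by
    rw [← Complex.exp_add]; congr 1; ring
  calc cexp (π*I*I/4 + π*I*z) * (cexp (-π*(z + I/2)^2) * jacobiTheta₂ (1/2 - I*z) I)
      = (cexp (π*I*I/4 + π*I*z) * cexp (-π*(z + I/2)^2)) * jacobiTheta₂ (1/2 - I*z) I := by ring
    _ = _ := by rw [e7]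

/-! ### Conversion of `theta` to `jacobiTheta₂` / `Jo`, and nonvanishing -/

lemma theta_zero (b : ℝ) (z τ : ℂ) : theta 0 b z τ = jacobiTheta₂ (z + (b:ℂ)) τ := by
  rw [theta, jacobiTheta₂]
  refine tsum_congr fun n => ?_
  rw [jacobiTheta₂_term]
  congr 1
  push_cast
  ring

lemma theta_half (z τ : ℂ) : theta (1/2) 0 z τ = Jo z τ := by
  rw [theta, Jo]
  refine tsum_congr fun n => ?_
  rw [Joterm]
  congr 1
  push_cast
  ring

lemma J0_ne : jacobiTheta₂ 0 I ≠ 0 := by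
  have hsum : Summable (fun n : ℤ => rexp (-π * n^2)) := by
    refine (summ_norm_J' 0 I (by simp)).congr fun n => ?_
    rw [norm_jacobiTheta₂_term]
    norm_num
  have h0 : (0:ℝ) < ∑' n : ℤ, rexp (-π * n^2) :=
    Summable.tsum_pos hsum (fun n => (Real.exp_pos _).le) 0 (Real.exp_pos _)
  have heq : jacobiTheta₂ 0 I = ((∑' n : ℤ, rexp (-π * n^2) : ℝ) : ℂ) := by
    rw [jacobiTheta₂, Complex.ofReal_tsum]
    refine tsum_congr fun n => ?_
    rw [jacobiTheta₂_term, Complex.ofReal_exp]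
    congr 1
    push_cast
    linear_combination (π:ℂ)*(n:ℂ)^2*Complex.I_sq
  rw [heq]
  exact_mod_cast h0.ne'

/-- (1+i)-multiplication formula for θ_{0,0} at τ = i. -/
theorem theta_one_add_i_mult (z : ℂ) :
    theta 0 0 ((1 + Complex.I) * z) Complex.I *
      Complex.exp (Real.pi * Complex.I * (1 + Complex.I) * z^2) *
      theta 0 (1/2) 0 Complex.I * theta (1/2) 0 0 Complex.I =
    theta 0 0 0 Complex.I * theta 0 (1/2) z Complex.I *
      theta (1/2) 0 z Complex.I := by
  have hI : (0:ℝ) < im I := by simp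
  have hs : ((Real.sqrt 2:ℝ):ℂ) * ((Real.sqrt 2:ℝ):ℂ) = 2 := by
    rw [← Complex.ofReal_mul, Real.mul_self_sqrt (by norm_num)]
    norm_num
  have hs0 : ((Real.sqrt 2:ℝ):ℂ) ≠ 0 :=
    Complex.ofReal_ne_zero.mpr (ne_of_gt (Real.sqrt_pos.mpr two_pos))
  have hE : cexp (-(π:ℂ)*I*z^2) * cexp ((π:ℂ)*I*z^2) = 1 := by
    rw [← Complex.exp_add, show (-(π:ℂ)*I*z^2 + (π:ℂ)*I*z^2) = 0 by ring, Complex.exp_zero]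
  -- product formula instances
  have h4 := J_prod (z + 1/2) (1/2 - I*z) I hI
  rw [show ((z+1/2)+(1/2-I*z) : ℂ) = ((1-I)*z) + 1 by ring,
      show ((z+1/2)-(1/2-I*z) : ℂ) = (1+I)*z by ring,
      jacobiTheta₂_add_left, Jo_add_one] at h4
  have h5 := J_prod (1/2 : ℂ) (1/2 : ℂ) I hI
  rw [show ((1/2:ℂ)+(1/2:ℂ)) = (0:ℂ)+1 by norm_num,
      show ((1/2:ℂ)-(1/2:ℂ)) = (0:ℂ) by norm_num,
      jacobiTheta₂_add_left, Jo_add_one] at h5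
  have h6 := J_prod ((1+I)*z) 0 I hI
  rw [add_zero, sub_zero] at h6
  have h7 := J_prod 0 0 I hI
  rw [add_zero, sub_zero] at h7
  -- functional equation instances
  have hr1 := R1 ((1+I)*z)
  rw [show (-I*((1+I)*z) : ℂ) = (1-I)*z by linear_combination (-z)*Complex.I_sq,
      show (-(π:ℂ) * ((1+I)*z)^2/2 : ℂ) = -(π:ℂ)*I*z^2 by
        linear_combination (-(π:ℂ)*z^2/2)*Complex.I_sq] at hr1
  have hr2 := R1' ((1+I)*z)
  rw [show (-I*((1+I)*z) : ℂ) = (1-I)*z by linear_combination (-z)*Complex.I_sq,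
      show (-(π:ℂ) * ((1+I)*z)^2/2 : ℂ) = -(π:ℂ)*I*z^2 by
        linear_combination (-(π:ℂ)*z^2/2)*Complex.I_sq] at hr2
  have hr3 := R1 0
  simp only [mul_zero] at hr3
  norm_num at hr3
  -- multiplied versions
  have hr1' : ((Real.sqrt 2:ℝ):ℂ) * jacobiTheta₂ ((1+I)*z) (2*I)
      = cexp (-(π:ℂ)*I*z^2) * (jacobiTheta₂ ((1-I)*z) (2*I) + Jo ((1-I)*z) (2*I)) := by
    rw [hr1]; field_simp
  have hr2' : ((Real.sqrt 2:ℝ):ℂ) * Jo ((1+I)*z) (2*I)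
      = cexp (-(π:ℂ)*I*z^2) * (jacobiTheta₂ ((1-I)*z) (2*I) - Jo ((1-I)*z) (2*I)) := by
    rw [hr2]; field_simp
  have hr3' : ((Real.sqrt 2:ℝ):ℂ) * jacobiTheta₂ 0 (2*I)
      = jacobiTheta₂ 0 (2*I) + Jo 0 (2*I) := by
    conv_lhs => rw [hr3]
    rw [mul_inv_cancel_left₀ hs0]
  have hT : Jo 0 (2*I) = (((Real.sqrt 2:ℝ):ℂ) - 1) * jacobiTheta₂ 0 (2*I) := by
    linear_combination -hr3'
  have hA : jacobiTheta₂ ((1-I)*z) (2*I) + Jo ((1-I)*z) (2*I)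
      = ((Real.sqrt 2:ℝ):ℂ) * jacobiTheta₂ ((1+I)*z) (2*I) * cexp ((π:ℂ)*I*z^2) := by
    linear_combination (-cexp ((π:ℂ)*I*z^2))*hr1'
      + (-(jacobiTheta₂ ((1-I)*z) (2*I) + Jo ((1-I)*z) (2*I)))*hE
  have hB : jacobiTheta₂ ((1-I)*z) (2*I) - Jo ((1-I)*z) (2*I)
      = ((Real.sqrt 2:ℝ):ℂ) * Jo ((1+I)*z) (2*I) * cexp ((π:ℂ)*I*z^2) := by
    linear_combination (-cexp ((π:ℂ)*I*z^2))*hr2'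
      + (-(jacobiTheta₂ ((1-I)*z) (2*I) - Jo ((1-I)*z) (2*I)))*hE
  have hPQ : 2*(jacobiTheta₂ ((1-I)*z) (2*I) * jacobiTheta₂ ((1+I)*z) (2*I)
        - Jo ((1-I)*z) (2*I) * Jo ((1+I)*z) (2*I))
      = ((Real.sqrt 2:ℝ):ℂ) * cexp ((π:ℂ)*I*z^2) *
        (jacobiTheta₂ ((1+I)*z) (2*I) * jacobiTheta₂ ((1+I)*z) (2*I)
          + Jo ((1+I)*z) (2*I) * Jo ((1+I)*z) (2*I)) := by
    linear_combination (jacobiTheta₂ ((1+I)*z) (2*I) - Jo ((1+I)*z) (2*I))*hA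
      + (jacobiTheta₂ ((1+I)*z) (2*I) + Jo ((1+I)*z) (2*I))*hB
  -- the multiplied main identity
  have hbig : (jacobiTheta₂ ((1+I)*z) I * cexp ((π:ℂ)*I*z^2) *
        (jacobiTheta₂ (1/2 : ℂ) I * jacobiTheta₂ (1/2 : ℂ) I)) * jacobiTheta₂ 0 I
      = (jacobiTheta₂ 0 I * (jacobiTheta₂ (z + 1/2) I * jacobiTheta₂ (1/2 - I*z) I)) *
        jacobiTheta₂ 0 I := by
    rw [hT] at h5 h7
    linear_combination (cexp ((π:ℂ)*I*z^2) * (jacobiTheta₂ (1/2:ℂ) I * jacobiTheta₂ (1/2:ℂ) I)) * h6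
      + (cexp ((π:ℂ)*I*z^2) * (jacobiTheta₂ ((1+I)*z) (2*I) * jacobiTheta₂ ((1+I)*z) (2*I)
          + Jo ((1+I)*z) (2*I) * Jo ((1+I)*z) (2*I))) * h5
      + (-(jacobiTheta₂ (z+1/2) I * jacobiTheta₂ (1/2 - I*z) I)) * h7
      + (-(jacobiTheta₂ 0 (2*I) * jacobiTheta₂ 0 (2*I)
          + ((((Real.sqrt 2:ℝ):ℂ) - 1) * jacobiTheta₂ 0 (2*I)) *
            ((((Real.sqrt 2:ℝ):ℂ) - 1) * jacobiTheta₂ 0 (2*I)))) * h4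
      + (-(jacobiTheta₂ 0 (2*I) * jacobiTheta₂ 0 (2*I)
          + ((((Real.sqrt 2:ℝ):ℂ) - 1) * jacobiTheta₂ 0 (2*I)) *
            ((((Real.sqrt 2:ℝ):ℂ) - 1) * jacobiTheta₂ 0 (2*I)))/2) * hPQ
      + (-(cexp ((π:ℂ)*I*z^2) * (jacobiTheta₂ ((1+I)*z) (2*I) * jacobiTheta₂ ((1+I)*z) (2*I)
          + Jo ((1+I)*z) (2*I) * Jo ((1+I)*z) (2*I)) * jacobiTheta₂ 0 (2*I) * jacobiTheta₂ 0 (2*I)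
          * ((Real.sqrt 2:ℝ):ℂ)/2)) * hs
  have hstar := mul_right_cancel₀ J0_ne hbig
  -- convert the target
  rw [theta_zero, theta_zero, theta_zero, theta_zero, theta_half, theta_half, Jo_I z, Jo_I 0]
  push_cast
  simp only [add_zero, zero_add, mul_zero, sub_zero]
  norm_num
  rw [show ((π:ℂ) * I * (1+I) * z^2) = (π:ℂ)*I*z^2 + (-(π:ℂ)*z^2) by
        linear_combination ((π:ℂ)*z^2)*Complex.I_sq,
      Complex.exp_add]
  have hC : cexp (-((π:ℂ) * z ^ 2)) = cexp (-(π:ℂ) * z ^ 2) := by norm_num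
  rw [hC]
  linear_combination cexp (-(π:ℂ)*z^2) * hstar
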